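/- arXiv:2209.10135 — 2 statements merged into one kernel-verified Lean document; each statement's English description precedes it below -/
import Mathlib

section
/- If u ∈ C and v lies in the closure of C with v ≠ 0, then (u, v) > 0. (Reverse Cauchy–Schwarz for Lorentzian forms: two nonzero vectors in the closure of the same positive cone have nonnegative pairing, strictly positive if one of them has positive norm.) -/
/-- Reverse Cauchy–Schwarz for Lorentzian forms: if `u` lies in the positive cone
`C` and `v ≠ 0` lies in the closure of `C`, then `(u, v) > 0`. -/
theorem lorentzian_reverse_cauchy_schwarz {n : ℕ} (hn : 2 ≤ n)
    (B : (Fin n → ℝ) →ₗ[ℝ] (Fin n → ℝ) →ₗ[ℝ] ℝ)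
    (hsymm : ∀ v w, B v w = B w v)
    (hsig : ∃ e : Fin n → ℝ, 0 < B e e ∧ ∀ w, B e w = 0 → w ≠ 0 → B w w < 0)
    (C : Set (Fin n → ℝ))
    (hC : ∃ u, 0 < B u u ∧ C = connectedComponentIn {v | 0 < B v v} u) :
    ∀ u ∈ C, ∀ v ∈ closure C, v ≠ 0 → 0 < B u v := by
  obtain ⟨e, he, hneg⟩ := hsig
  -- Key algebraic lemma
  have key : ∀ u v : Fin n → ℝ, 0 < B u u → B u v = 0 → 0 ≤ B v v → v = 0 := by
    intro u v hu huv hv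
    by_contra hv0
    have hu0 : u ≠ 0 := by
      intro h; rw [h] at hu; simp at hu
    set z := (B e v) • u - (B e u) • v with hz
    have hvu : B v u = 0 := by rw [hsymm]; exact huv
    have hez : B e z = 0 := by
      simp only [hz, map_sub, map_smul, smul_eq_mul]
      ring
    have hzz : B z z = (B e v)^2 * B u u + (B e u)^2 * B v v := by
      simp only [hz, map_sub, map_smul, LinearMap.sub_apply, LinearMap.smul_apply,
        smul_eq_mul]
      rw [huv, hvu]; ring
    have hz0 : z = 0 := by
      by_contra hzne
      have := hneg z hez hzne
      nlinarith [sq_nonneg (B e v), sq_nonneg (B e u)]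
    -- from z = 0
    have heq : (B e v) • u = (B e u) • v := by
      have := sub_eq_zero.mp (hz ▸ hz0)
      exact this
    have hBev : B e v = 0 := by
      by_contra hne
      have : B ((B e v) • u) u = B ((B e u) • v) u := by rw [heq]
      simp only [map_smul, LinearMap.smul_apply, smul_eq_mul] at this
      rw [hvu] at this
      have : B e v * B u u = 0 := by linarith
      rcases mul_eq_zero.mp this with h | h
      · exact hne h
      · exact absurd h (ne_of_gt hu)
    rw [hBev, zero_smul] at heq
    have hBeu : B e u = 0 := by
      by_contra hne
      apply hv0
      have := heq.symm
      rcases smul_eq_zero.mp this with h | h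
      · exact absurd h hne
      · exact h
    exact absurd (hneg u hBeu hu0) (not_lt.mpr hu.le)
  obtain ⟨u₀, hu₀, hCdef⟩ := hC
  intro u huC v hvcl hv0
  have hCsub : C ⊆ {v | 0 < B v v} := by
    rw [hCdef]; exact connectedComponentIn_subset _ _
  have hCconn : IsPreconnected C := by
    rw [hCdef]; exact (isPreconnected_connectedComponentIn)
  have huu : 0 < B u u := hCsub huC
  -- continuity
  have hBu : Continuous fun w => B u w :=
    (B u).continuous_of_finiteDimensional
  have hB' : Continuous fun w : Fin n → ℝ =>
      (LinearMap.toContinuousLinearMap (B w) : (Fin n → ℝ) →L[ℝ] ℝ) :=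
    (LinearMap.toContinuousLinearMap.toLinearMap.comp B).continuous_of_finiteDimensional
  have hQ : Continuous fun w : Fin n → ℝ => B w w := by
    have h := isBoundedBilinearMap_apply.continuous.comp (hB'.prodMk continuous_id)
    simpa [Function.comp_def] using h
  -- positivity on C
  have hpos : ∀ w ∈ C, 0 < B u w := by
    intro w hw
    have hne : ∀ x ∈ C, B u x ≠ 0 := by
      intro x hx hx0
      have hxx : 0 < B x x := hCsub hx
      have := key u x huu hx0 (hCsub hx).le
      rw [this] at hxx; simp at hxx
    rcases lt_trichotomy (B u w) 0 with h | h | h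
    · exfalso
      obtain ⟨x, hxC, hx⟩ := hCconn.intermediate_value₂ hw huC
        (hBu.continuousOn) continuousOn_const h.le huu.le
      exact hne x hxC hx
    · exact absurd h (hne w hw)
    · exact h
  -- pass to closure
  have h1 : 0 ≤ B u v := by
    have : closure C ⊆ {x | 0 ≤ B u x} :=
      closure_minimal (fun w hw => (hpos w hw).le) (isClosed_le continuous_const hBu)
    exact this hvcl
  have h2 : 0 ≤ B v v := by
    have : closure C ⊆ {x | 0 ≤ B x x} :=
      closure_minimal (fun w hw => le_of_lt (show (0:ℝ) < B w w from hCsub hw)) (isClosed_le continuous_const hQ)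
    exact this hvcl
  rcases h1.lt_or_eq with h | h
  · exact h
  · exact absurd (key u v huu h.symm h2) hv0
end

section
/- The closure of the positive cone C is self-dual: closure(C) = {v ∈ V : (v, w) ≥ 0 for all w ∈ C}. -/
set_option maxHeartbeats 1000000

section Aux

variable {n : ℕ} (B : (Fin n → ℝ) →ₗ[ℝ] (Fin n → ℝ) →ₗ[ℝ] ℝ)

/-- Cauchy–Schwarz on the orthogonal complement of `e`, where `B` is negative semidefinite. -/
private lemma aux_cs (hsymm : ∀ v w, B v w = B w v) (e : Fin n → ℝ)
    (hneg : ∀ w, B e w = 0 → w ≠ 0 → B w w < 0)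
    (v w : Fin n → ℝ) (hv : B e v = 0) (hw : B e w = 0) :
    B v w * B v w ≤ B v v * B w w := by
  have hsemi : ∀ z, B e z = 0 → B z z ≤ 0 := by
    intro z hz
    by_cases h0 : z = 0
    · simp [h0]
    · exact (hneg z hz h0).le
  have key : ∀ x : ℝ, 0 ≤ (-(B v v)) * (x * x) + (-(2 * B v w)) * x + (-(B w w)) := by
    intro x
    have hz : B e (x • v + w) = 0 := by
      simp [map_add, map_smul, smul_eq_mul, hv, hw]
    have h := hsemi (x • v + w) hz
    have hexp : B (x • v + w) (x • v + w)
        = B v v * (x * x) + (2 * B v w) * x + B w w := by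
      simp only [map_add, map_smul, LinearMap.add_apply, LinearMap.smul_apply, smul_eq_mul]
      rw [hsymm w v]; ring
    rw [hexp] at h
    linarith
  have hd := discrim_le_zero key
  rw [discrim] at hd
  nlinarith [hd]

/-- Reverse Cauchy–Schwarz for the Lorentzian cone. -/
private lemma aux_revcs (hsymm : ∀ v w, B v w = B w v) (e : Fin n → ℝ)
    (he : 0 < B e e) (hneg : ∀ w, B e w = 0 → w ≠ 0 → B w w < 0)
    (v w : Fin n → ℝ) (hvv : 0 ≤ B v v) (hww : 0 ≤ B w w)
    (hev : 0 ≤ B e v) (hew : 0 ≤ B e w) : 0 ≤ B v w := by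
  set a := B e v / B e e with ha_def
  set b := B e w / B e e with hb_def
  set v' := v - a • e with hv'def
  set w' := w - b • e with hw'def
  have haα : a * B e e = B e v := div_mul_cancel₀ _ (ne_of_gt he)
  have hbα : b * B e e = B e w := div_mul_cancel₀ _ (ne_of_gt he)
  have ha : 0 ≤ a := div_nonneg hev he.le
  have hb : 0 ≤ b := div_nonneg hew he.le
  have hv'e : B e v' = 0 := by
    simp only [hv'def, map_sub, map_smul, smul_eq_mul]
    linear_combination -haα
  have hw'e : B e w' = 0 := by
    simp only [hw'def, map_sub, map_smul, smul_eq_mul]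
    linear_combination -hbα
  have hvE : B v' v' = B v v - a * a * B e e := by
    simp only [hv'def, map_sub, map_smul, LinearMap.sub_apply, LinearMap.smul_apply, smul_eq_mul]
    linear_combination 2 * a * haα - a * (hsymm v e)
  have hwE : B w' w' = B w w - b * b * B e e := by
    simp only [hw'def, map_sub, map_smul, LinearMap.sub_apply, LinearMap.smul_apply, smul_eq_mul]
    linear_combination 2 * b * hbα - b * (hsymm w e)
  have hvwE : B v' w' = B v w - a * b * B e e := by
    simp only [hv'def, hw'def, map_sub, map_smul, LinearMap.sub_apply, LinearMap.smul_apply,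
      smul_eq_mul]
    linear_combination a * hbα + b * haα - b * (hsymm v e)
  have hβ : B v' v' ≤ 0 := by
    by_cases h0 : v' = 0
    · simp [h0]
    · exact (hneg v' hv'e h0).le
  have hγ : B w' w' ≤ 0 := by
    by_cases h0 : w' = 0
    · simp [h0]
    · exact (hneg w' hw'e h0).le
  have hcs := aux_cs B hsymm e hneg v' w' hv'e hw'e
  have h1 : -(B v' v') ≤ a * a * B e e := by rw [hvE]; linarith
  have h2 : -(B w' w') ≤ b * b * B e e := by rw [hwE]; linarith
  have hprod : (-(B v' v')) * (-(B w' w')) ≤ (a * a * B e e) * (b * b * B e e) :=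
    mul_le_mul h1 h2 (by linarith) (by positivity)
  have hm : 0 ≤ a * b * B e e := by positivity
  have hdd : (B v' w') * (B v' w') ≤ (a * b * B e e) * (a * b * B e e) := by nlinarith [hcs]
  have hfin : 0 ≤ a * b * B e e + B v' w' := by nlinarith [hdd, hm]
  have : B v w = a * b * B e e + B v' w' := by rw [hvwE]; ring
  linarith [this.le, this.ge]

private lemma aux_contQ : Continuous fun v => B v v := by
  have h1 : Continuous fun v : Fin n → ℝ => (LinearMap.toContinuousLinearMap (B v)) :=
    (LinearMap.toContinuousLinearMap
      ((LinearMap.toContinuousLinearMap :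
        ((Fin n → ℝ) →ₗ[ℝ] ℝ) ≃ₗ[ℝ] _).toLinearMap.comp B)).continuous
  simpa using h1.clm_apply continuous_id

private lemma aux_contL (w : Fin n → ℝ) : Continuous fun v => B v w := by
  have := (LinearMap.toContinuousLinearMap (B.flip w)).continuous
  convert this using 1
  ext v; simp

/-- Main argument, assuming `e` has been oriented so that `B e u > 0`. -/
private lemma aux_main (hsymm : ∀ v w, B v w = B w v) (e : Fin n → ℝ)
    (he : 0 < B e e) (hneg : ∀ w, B e w = 0 → w ≠ 0 → B w w < 0)
    (u : Fin n → ℝ) (hu : 0 < B u u) (heu : 0 < B e u) :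
    closure (connectedComponentIn {v | 0 < B v v} u)
      = {v | ∀ w ∈ connectedComponentIn {v | 0 < B v v} u, 0 ≤ B v w} := by
  set P : Set (Fin n → ℝ) := {v | 0 < B v v} with hPdef
  set S : Set (Fin n → ℝ) := {v | 0 < B v v ∧ 0 < B e v} with hSdef
  set S' : Set (Fin n → ℝ) := {v | 0 < B v v ∧ B e v < 0} with hS'def
  have contQ := aux_contQ B
  have contBe : Continuous fun v => B e v := (LinearMap.toContinuousLinearMap (B e)).continuous
  have hSopen : IsOpen S := (isOpen_lt continuous_const contQ).inter
    (isOpen_lt continuous_const contBe)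
  have hS'open : IsOpen S' := (isOpen_lt continuous_const contQ).inter
    (isOpen_lt contBe continuous_const)
  have hSconv : Convex ℝ S := by
    intro v hv w hw a b ha hb hab
    obtain ⟨hv1, hv2⟩ := hv
    obtain ⟨hw1, hw2⟩ := hw
    have hvw : 0 ≤ B v w := aux_revcs B hsymm e he hneg v w hv1.le hw1.le hv2.le hw2.le
    have hwv : B w v = B v w := hsymm w v
    have hexp1 : B (a • v + b • w) (a • v + b • w)
        = a * a * B v v + 2 * (a * b) * B v w + b * b * B w w := by
      simp only [map_add, map_smul, LinearMap.add_apply, LinearMap.smul_apply, smul_eq_mul]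
      rw [hwv]; ring
    have hexp2 : B e (a • v + b • w) = a * B e v + b * B e w := by
      simp [map_add, map_smul, smul_eq_mul]
    constructor
    · show 0 < B (a • v + b • w) (a • v + b • w)
      rw [hexp1]
      rcases ha.eq_or_lt with h | h
      · have hb1 : b = 1 := by linarith
        rw [← h, hb1]; simpa using hw1
      · nlinarith [mul_nonneg (mul_nonneg ha hb) hvw, mul_nonneg (mul_nonneg hb hb) hw1.le,
          mul_pos (mul_pos h h) hv1]
    · show 0 < B e (a • v + b • w)
      rw [hexp2]
      rcases ha.eq_or_lt with h | h
      · have hb1 : b = 1 := by linarith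
        rw [← h, hb1]; simpa using hw2
      · nlinarith [mul_nonneg hb hw2.le]
  have huP : u ∈ P := hu
  have huS : u ∈ S := ⟨hu, heu⟩
  have hSP : S ⊆ P := fun v hv => hv.1
  have hCS : connectedComponentIn P u = S := by
    apply Set.Subset.antisymm
    · apply IsPreconnected.subset_left_of_subset_union hSopen hS'open
      · rw [Set.disjoint_left]
        rintro v ⟨_, h2⟩ ⟨_, h4⟩
        linarith
      · intro v hv
        have hvP : v ∈ P := connectedComponentIn_subset P u hv
        have hv0 : v ≠ 0 := by
          intro h; rw [h] at hvP; simp [hPdef] at hvP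
        have hne : B e v ≠ 0 := by
          intro h
          exact absurd (hneg v h hv0) (not_lt.mpr hvP.le)
        rcases hne.lt_or_gt with h | h
        · exact Or.inr ⟨hvP, h⟩
        · exact Or.inl ⟨hvP, h⟩
      · exact ⟨u, mem_connectedComponentIn huP, huS⟩
      · exact isPreconnected_connectedComponentIn
    · exact hSconv.isPreconnected.subset_connectedComponentIn huS hSP
  rw [hCS]
  apply Set.Subset.antisymm
  · -- closure S ⊆ dual
    have hclosed : IsClosed {v | ∀ w ∈ S, 0 ≤ B v w} := by
      rw [show {v | ∀ w ∈ S, 0 ≤ B v w} = ⋂ w ∈ S, {v | 0 ≤ B v w} by ext; simp]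
      exact isClosed_biInter fun w _ => isClosed_le continuous_const (aux_contL B w)
    apply closure_minimal _ hclosed
    intro v hv w hw
    exact aux_revcs B hsymm e he hneg v w hv.1.le hw.1.le hv.2.le hw.2.le
  · -- dual ⊆ closure S
    intro v hv
    have heS : e ∈ S := ⟨he, he⟩
    have hve : 0 ≤ B v e := hv e heS
    have hev : 0 ≤ B e v := (hsymm e v) ▸ hve
    set a := B e v / B e e with ha_def
    set v' := v - a • e with hv'def
    have haα : a * B e e = B e v := div_mul_cancel₀ _ (ne_of_gt he)
    have ha : 0 ≤ a := div_nonneg hev he.le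
    have hv'e : B e v' = 0 := by
      simp only [hv'def, map_sub, map_smul, smul_eq_mul]
      linear_combination -haα
    have hv'sym : B v' e = 0 := (hsymm v' e) ▸ hv'e
    have hvv' : B v v' = B v v - a * a * B e e := by
      simp only [hv'def, map_sub, map_smul, smul_eq_mul]
      linear_combination a * haα - a * (hsymm v e)
    have hv'v' : B v' v' = B v v - a * a * B e e := by
      simp only [hv'def, map_sub, map_smul, LinearMap.sub_apply, LinearMap.smul_apply, smul_eq_mul]
      linear_combination 2 * a * haα - a * (hsymm v e)
    have hvv : 0 ≤ B v v := by
      by_contra hvvn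
      push_neg at hvvn
      have hβneg : B v' v' < 0 := by
        rw [hv'v']
        nlinarith [mul_nonneg (mul_nonneg ha ha) he.le]
      set β := B v' v' with hβdef
      have hq : 0 < -β / B e e := div_pos (by linarith) he
      set t := Real.sqrt (-β / B e e) with htdef
      have ht2 : t * t * B e e = -β := by
        rw [htdef, Real.mul_self_sqrt hq.le]
        field_simp
      have ht0 : 0 < t := Real.sqrt_pos.mpr hq
      rcases ha.eq_or_lt with haz | hapos
      · -- a = 0, so B e v = 0 and B v w = B v v < 0 for suitable w ∈ S
        have hev0 : B e v = 0 := by rw [← haα, ← haz]; ring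
        have hve0 : B v e = 0 := (hsymm v e) ▸ hev0
        set w := (t + 1) • e + v' with hwdef
        have hww : B w w = (t + 1) * (t + 1) * B e e + β := by
          simp only [hwdef, map_add, map_smul, LinearMap.add_apply, LinearMap.smul_apply,
            smul_eq_mul]
          rw [hv'e, hv'sym]; ring
        have hew' : B e w = (t + 1) * B e e := by
          simp only [hwdef, map_add, map_smul, smul_eq_mul]
          rw [hv'e]; ring
        have hwS : w ∈ S := by
          refine ⟨?_, ?_⟩
          · show 0 < B w w
            rw [hww]
            nlinarith [ht2, mul_pos ht0 he, he]
          · show 0 < B e w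
            rw [hew']
            nlinarith [he, ht0]
        have hvw : B v w = B v v := by
          have h1 : B v w = (t + 1) * B v e + B v v' := by
            simp only [hwdef, map_add, map_smul, smul_eq_mul]
          rw [h1, hve0, hvv', ← haz]; ring
        have := hv w hwS
        rw [hvw] at this
        linarith
      · -- 0 < a
        have hat2 : a * a * B e e < t * t * B e e := by
          rw [ht2]; linarith [hv'v', hvvn]
        have haa : a * a < t * t := lt_of_mul_lt_mul_right hat2 he.le
        have hat : a < t := by nlinarith [haa, ht0, ha]
        set s := (t + t * t / a) / 2 with hsdef
        have hts : t < t * t / a := by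
          rw [lt_div_iff₀ hapos]; nlinarith
        have hs1 : t < s := by rw [hsdef]; linarith
        have hs2 : s < t * t / a := by rw [hsdef]; linarith
        have hsa : s * a < t * t := by
          have h := (lt_div_iff₀ hapos).mp hs2
          linarith
        set w := s • e + v' with hwdef
        have hww : B w w = s * s * B e e + β := by
          simp only [hwdef, map_add, map_smul, LinearMap.add_apply, LinearMap.smul_apply,
            smul_eq_mul]
          rw [hv'e, hv'sym]; ring
        have hew' : B e w = s * B e e := by
          simp only [hwdef, map_add, map_smul, smul_eq_mul]
          rw [hv'e]; ring
        have hwS : w ∈ S := by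
          refine ⟨?_, ?_⟩
          · show 0 < B w w
            rw [hww]
            have h1 : t * t < s * s := by nlinarith [hs1, ht0]
            have h2 : t * t * B e e < s * s * B e e := by
              exact mul_lt_mul_of_pos_right h1 he
            linarith [ht2]
          · show 0 < B e w
            rw [hew']
            nlinarith [he, ht0, hs1]
        have hvw : B v w = s * a * B e e + β := by
          have h1 : B v w = s * B v e + B v v' := by
            simp only [hwdef, map_add, map_smul, smul_eq_mul]
          rw [h1, hvv']
          linear_combination s * (hsymm v e) - s * haα - hv'v'
        have hvwneg : B v w < 0 := by
          rw [hvw]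
          nlinarith [hsa, he, ht2]
        have := hv w hwS
        linarith
    -- now approximate v by v + ε • e ∈ S
    have htend : Filter.Tendsto (fun ε : ℝ => v + ε • e) (nhdsWithin (0:ℝ) (Set.Ioi (0:ℝ))) (nhds v) := by
      have hcont : Continuous fun ε : ℝ => v + ε • e := by continuity
      have h : Filter.Tendsto (fun ε : ℝ => v + ε • e) (nhdsWithin (0:ℝ) (Set.Ioi (0:ℝ)))
          (nhds (v + (0:ℝ) • e)) := (hcont.tendsto 0).mono_left nhdsWithin_le_nhds
      simpa using h
    have hev' : ∀ᶠ ε in nhdsWithin (0 : ℝ) (Set.Ioi 0), (v + ε • e) ∈ S := by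
      filter_upwards [self_mem_nhdsWithin] with ε hε
      have hε' : 0 < ε := hε
      refine ⟨?_, ?_⟩
      · show 0 < B (v + ε • e) (v + ε • e)
        have hexp : B (v + ε • e) (v + ε • e)
            = B v v + ε * B v e + ε * B e v + ε * ε * B e e := by
          simp only [map_add, map_smul, LinearMap.add_apply, LinearMap.smul_apply, smul_eq_mul]
          ring
        rw [hexp]
        nlinarith [mul_nonneg hε'.le hve, mul_nonneg hε'.le hev,
          mul_pos (mul_pos hε' hε') he]
      · show 0 < B e (v + ε • e)
        have hexp : B e (v + ε • e) = B e v + ε * B e e := by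
          simp [map_add, map_smul, smul_eq_mul]
        rw [hexp]
        nlinarith [mul_pos hε' he]
    exact mem_closure_of_tendsto htend hev'

end Aux

/-- The closure of the positive cone `C` is self-dual:
`closure C = {v | (v, w) ≥ 0 for all w ∈ C}`. -/
theorem positive_cone_closure_self_dual {n : ℕ} (hn : 2 ≤ n)
    (B : (Fin n → ℝ) →ₗ[ℝ] (Fin n → ℝ) →ₗ[ℝ] ℝ)
    (hsymm : ∀ v w, B v w = B w v)
    (hsig : ∃ e : Fin n → ℝ, 0 < B e e ∧ ∀ w, B e w = 0 → w ≠ 0 → B w w < 0)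
    (C : Set (Fin n → ℝ))
    (hC : ∃ u, 0 < B u u ∧ C = connectedComponentIn {v | 0 < B v v} u) :
    closure C = {v | ∀ w ∈ C, 0 ≤ B v w} := by
  obtain ⟨e, he, hneg⟩ := hsig
  obtain ⟨u, hu, hCu⟩ := hC
  subst hCu
  have hu0 : u ≠ 0 := by
    intro h; rw [h] at hu; simp at hu
  have heu : B e u ≠ 0 := by
    intro h
    exact absurd (hneg u h hu0) (by linarith)
  rcases heu.lt_or_gt with h | h
  · -- use -e
    have he' : 0 < B (-e) (-e) := by simpa using he
    have hneg' : ∀ w, B (-e) w = 0 → w ≠ 0 → B w w < 0 := by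
      intro w hw hw0
      apply hneg w _ hw0
      simpa [neg_eq_zero] using hw
    have heu' : 0 < B (-e) u := by simpa using h
    exact aux_main B hsymm (-e) he' hneg' u hu heu'
  · exact aux_main B hsymm e he hneg u hu h
end
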